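/- Let V be a UM-potential in the special class SP. Then a(θ) + ā(θ) = π/√(V''(0)) for every θ > 0; in particular the function a + ā is constant on (0,∞). -/

import Mathlib

open Real MeasureTheory Set Filter intervalIntegral Topology

/-- A UM-potential: analytic, nonnegative, unimodal with minimum 0 at 0, tending to +∞. -/
structure IsUM (V : ℝ → ℝ) : Prop where
  analytic : ∀ x : ℝ, AnalyticAt ℝ V x
  nonneg : ∀ y : ℝ, 0 ≤ V y
  zero : V 0 = 0
  deriv_pos : ∀ y : ℝ, y ≠ 0 → 0 < y * deriv V y
  tendsto_top : Filter.Tendsto V Filter.atTop Filter.atTop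
  tendsto_bot : Filter.Tendsto V Filter.atBot Filter.atTop

/-- The degree of `V` at `0`: the least `m ≥ 1` with nonzero `m`-th derivative at `0`. -/
noncomputable def degAt0 (V : ℝ → ℝ) : ℕ :=
  sInf {m : ℕ | 1 ≤ m ∧ iteratedDeriv m V 0 ≠ 0}

/-- The inverse of the positive branch of a UM-potential. -/
noncomputable def Vinv (V : ℝ → ℝ) (θ : ℝ) : ℝ :=
  sSup {y : ℝ | 0 ≤ y ∧ V y ≤ θ}

/-- The reflected potential. -/
def reflP (V : ℝ → ℝ) : ℝ → ℝ := fun y => V (-y)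

/-- `a(θ) = ∫₀^{V⁻¹(θ)} dy / (√2 √(θ - V y))`. -/
noncomputable def aFun (V : ℝ → ℝ) (θ : ℝ) : ℝ :=
  ∫ y in (0:ℝ)..(Vinv V θ), 1 / (Real.sqrt 2 * Real.sqrt (θ - V y))

/-- `a_ξ(θ) = ∫₀^ξ dy / (√2 √(θ - V y))`. -/
noncomputable def aXi (V : ℝ → ℝ) (ξ θ : ℝ) : ℝ :=
  ∫ y in (0:ℝ)..ξ, 1 / (Real.sqrt 2 * Real.sqrt (θ - V y))

/-- The special class 𝒮𝒫. -/
def IsSP (V : ℝ → ℝ) : Prop :=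
  IsUM V ∧ degAt0 V = 2 ∧
  ∃ Vstar W : ℝ → ℝ,
    (∀ x : ℝ, AnalyticAt ℝ Vstar x) ∧ (∀ x : ℝ, AnalyticAt ℝ W x) ∧
    StrictMono Vstar ∧ Function.Bijective Vstar ∧
    (∀ x : ℝ, W (Vstar x) = x) ∧ (∀ x : ℝ, Vstar x ^ 2 = V x) ∧
    ∃ c : ℝ, c ≠ 0 ∧ ∃ f : ℝ → ℝ, (∀ x : ℝ, AnalyticAt ℝ f x) ∧
      ∀ x : ℝ, W x = c * x + f (x ^ 2)

lemma strictMono_hasDerivAt_nonneg {g : ℝ → ℝ} (hg : StrictMono g) {d x : ℝ}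
    (h : HasDerivAt g d x) : 0 ≤ d := by
  have h2 : Tendsto (slope g x) (𝓝[>] x) (𝓝 d) :=
    (hasDerivAt_iff_tendsto_slope.mp h).mono_left
      (nhdsWithin_mono x fun y hy => ne_of_gt hy)
  refine ge_of_tendsto h2 (eventually_nhdsWithin_of_forall fun y hy => ?_)
  have : 0 < slope g x y := by
    rw [slope_def_field]
    exact div_pos (sub_pos.mpr (hg hy)) (sub_pos.mpr hy)
  exact this.le

lemma sqrt_ii (θ : ℝ) (hθ : 0 < θ) :
    IntervalIntegrable (fun x => (Real.sqrt (θ - x^2))⁻¹) volume 0 (Real.sqrt θ) := by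
  set s := Real.sqrt θ with hsdef
  have hs : 0 < s := Real.sqrt_pos.mpr hθ
  have hs2 : s ^ 2 = θ := Real.sq_sqrt hθ.le
  have base : IntervalIntegrable (fun x : ℝ => x ^ (-(1/2) : ℝ)) volume 0 s :=
    intervalIntegral.intervalIntegrable_rpow' (by norm_num)
  have refl : IntervalIntegrable (fun x : ℝ => (s - x) ^ (-(1/2) : ℝ)) volume 0 s := by
    simpa using (base.comp_sub_left s).symm
  rw [intervalIntegrable_iff_integrableOn_Ioo_of_le hs.le] at refl ⊢
  refine Integrable.mono' (refl.const_mul ((Real.sqrt s)⁻¹)) ?_ ?_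
  · exact (((continuous_const.sub (continuous_pow 2)).sqrt).measurable.inv).aestronglyMeasurable
  · filter_upwards [ae_restrict_mem measurableSet_Ioo] with x hx
    obtain ⟨hx0, hxs⟩ := hx
    have h1 : θ - x ^ 2 = (s - x) * (s + x) := by rw [← hs2]; ring
    have h2 : Real.sqrt (θ - x ^ 2) = Real.sqrt (s - x) * Real.sqrt (s + x) := by
      rw [h1, Real.sqrt_mul (by linarith)]
    have h3 : (s - x) ^ (-(1/2) : ℝ) = (Real.sqrt (s - x))⁻¹ := by
      rw [Real.rpow_neg (by linarith), Real.sqrt_eq_rpow]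
    have hsx : 0 < Real.sqrt (s - x) := Real.sqrt_pos.mpr (by linarith)
    have hss : 0 < Real.sqrt s := Real.sqrt_pos.mpr hs
    have h4 : Real.sqrt s ≤ Real.sqrt (s + x) := Real.sqrt_le_sqrt (by linarith)
    rw [Real.norm_eq_abs, abs_of_nonneg (by positivity), h2, h3, mul_inv,
      mul_comm ((Real.sqrt (s-x))⁻¹)]
    gcongr

lemma sqrt_integral (θ : ℝ) (hθ : 0 < θ) :
    ∫ x in (0:ℝ)..Real.sqrt θ, (Real.sqrt (θ - x^2))⁻¹ = π / 2 := by
  set s := Real.sqrt θ with hsdef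
  have hs : 0 < s := Real.sqrt_pos.mpr hθ
  have hs2 : s ^ 2 = θ := Real.sq_sqrt hθ.le
  have hcont : ContinuousOn (fun x : ℝ => Real.arcsin (x / s)) (Icc 0 s) :=
    (Real.continuous_arcsin.comp (continuous_id.div_const s)).continuousOn
  have hderiv : ∀ x ∈ Ioo (0:ℝ) s,
      HasDerivWithinAt (fun x : ℝ => Real.arcsin (x / s)) ((Real.sqrt (θ - x^2))⁻¹) (Ioi x) x := by
    intro x hx
    obtain ⟨hx0, hxs⟩ := hx
    have hxs' : x / s < 1 := (div_lt_one hs).mpr hxs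
    have hxs0 : 0 < x / s := div_pos hx0 hs
    have h1 : HasDerivAt Real.arcsin (1 / Real.sqrt (1 - (x/s) ^ 2)) (x / s) :=
      Real.hasDerivAt_arcsin (by linarith) (ne_of_lt hxs')
    have h2 : HasDerivAt (fun x : ℝ => x / s) (1 / s) x := by
      simpa using (hasDerivAt_id x).div_const s
    have h3 := h1.comp x h2
    have hx2 : x ^ 2 < θ := by
      calc x ^ 2 < s ^ 2 := by gcongr
      _ = θ := hs2
    have key : 1 / Real.sqrt (1 - (x/s) ^ 2) * (1 / s) = (Real.sqrt (θ - x^2))⁻¹ := by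
      have e1 : 1 - (x / s) ^ 2 = (θ - x ^ 2) / θ := by
        rw [div_pow, hs2]; field_simp
      have e2 : Real.sqrt (1 - (x/s)^2) * s = Real.sqrt (θ - x^2) := by
        rw [e1, hsdef, ← Real.sqrt_mul (div_nonneg (by linarith) hθ.le) θ,
          div_mul_cancel₀ _ hθ.ne']
      rw [div_mul_div_comm, one_mul, e2, one_div]
    rw [key] at h3
    exact h3.hasDerivWithinAt
  have := intervalIntegral.integral_eq_sub_of_hasDeriv_right_of_le hs.le hcont hderiv
    (sqrt_ii θ hθ)
  rw [this, div_self hs.ne', zero_div, Real.arcsin_one, Real.arcsin_zero, sub_zero]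

/-- for `V ∈ 𝒮𝒫`, `a(θ) + ā(θ) = π/√(V''(0))` for all `θ > 0`;
in particular `a + ā` is constant on `(0,∞)`. -/
theorem stmt10 (V : ℝ → ℝ) (hV : IsSP V) :
    (∀ θ : ℝ, 0 < θ →
      aFun V θ + aFun (reflP V) θ = Real.pi / Real.sqrt (iteratedDeriv 2 V 0)) ∧
    ∀ θ₁ θ₂ : ℝ, 0 < θ₁ → 0 < θ₂ →
      aFun V θ₁ + aFun (reflP V) θ₁ = aFun V θ₂ + aFun (reflP V) θ₂ := by
  obtain ⟨hUM, -, Vstar, W, hVsa, hWa, hmono, hbij, hWV, hsq, c, hc, f, hfa, hWf⟩ := hV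
  -- basic algebraic facts
  have hVs0 : Vstar 0 = 0 := by
    have h := hsq 0; rw [hUM.zero] at h; exact sq_eq_zero_iff.mp h
  have hVsW : ∀ y, Vstar (W y) = y := by
    intro y; obtain ⟨x, hx⟩ := hbij.2 y; rw [← hx, hWV]
  have hW0 : W 0 = 0 := by have h := hWV 0; rwa [hVs0] at h
  have hWmono : StrictMono W := by
    intro a b hab
    have h : Vstar (W a) < Vstar (W b) := by rw [hVsW, hVsW]; exact hab
    exact hmono.lt_iff_lt.mp h
  have hWd : ∀ x, HasDerivAt W (deriv W x) x := fun x =>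
    (hWa x).differentiableAt.hasDerivAt
  have hVsd : ∀ x, HasDerivAt Vstar (deriv Vstar x) x := fun x =>
    (hVsa x).differentiableAt.hasDerivAt
  have hfd : ∀ x, HasDerivAt f (deriv f x) x := fun x =>
    (hfa x).differentiableAt.hasDerivAt
  have hWfun : W = fun x => c * x + f (x ^ 2) := funext hWf
  have hWderiv : ∀ x, deriv W x = c + deriv f (x ^ 2) * (2 * x) := by
    intro x
    have hp : HasDerivAt (fun x : ℝ => x ^ 2) (2 * x) x := by
      simpa using hasDerivAt_pow 2 x
    have h2 := (hfd (x ^ 2)).comp x hp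
    have hc1 : HasDerivAt (fun x : ℝ => c * x) c x := by
      simpa using (hasDerivAt_id x).const_mul c
    have h3 : HasDerivAt (fun x : ℝ => c * x + f (x ^ 2))
        (c + deriv f (x ^ 2) * (2 * x)) x := hc1.add h2
    rw [hWfun]; exact h3.deriv
  have hsum : ∀ x, deriv W x + deriv W (-x) = 2 * c := by
    intro x; rw [hWderiv x, hWderiv (-x), neg_sq]; ring
  have hWdnn : ∀ x, 0 ≤ deriv W x := fun x =>
    strictMono_hasDerivAt_nonneg hWmono (hWd x)
  have hcW : deriv W 0 = c := by rw [hWderiv]; ring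
  have hcpos : 0 < c := lt_of_le_of_ne (hcW ▸ hWdnn 0) (Ne.symm hc)
  -- derivative of Vstar at 0
  have hVs'0 : deriv Vstar 0 = 1 / c := by
    have h1 : HasDerivAt (fun x => W (Vstar x)) (deriv W (Vstar 0) * deriv Vstar 0) 0 :=
      (hWd (Vstar 0)).comp 0 (hVsd 0)
    have h2 : (fun x => W (Vstar x)) = fun x : ℝ => x := funext hWV
    rw [h2] at h1
    have h3 := h1.unique (hasDerivAt_id' (x := (0:ℝ)))
    rw [hVs0, hcW] at h3
    field_simp
    linarith [h3]
  -- second derivative of V at 0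
  have hitd : iteratedDeriv 2 V 0 = 2 / c ^ 2 := by
    have hVder : deriv V = fun y => 2 * Vstar y * deriv Vstar y := by
      funext y
      have h := (hVsd y).pow 2
      rw [show (Vstar ^ 2) = V from funext hsq] at h
      simpa using h.deriv
    have hD : AnalyticAt ℝ (deriv Vstar) 0 := by
      have hOn : AnalyticOnNhd ℝ Vstar univ := fun x _ => hVsa x
      exact hOn.deriv 0 (mem_univ 0)
    have h2 : HasDerivAt (fun y => 2 * Vstar y * deriv Vstar y)
        (2 * deriv Vstar 0 * deriv Vstar 0 + 2 * Vstar 0 * deriv (deriv Vstar) 0) 0 :=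
      ((hVsd 0).const_mul 2).mul hD.differentiableAt.hasDerivAt
    have h3 : iteratedDeriv 2 V 0 = deriv (deriv V) 0 := by
      rw [iteratedDeriv_succ, iteratedDeriv_one]
    rw [h3, hVder, h2.deriv, hVs0, hVs'0]
    field_simp
    ring
  have hsqrt2c : Real.sqrt (2 / c ^ 2) = Real.sqrt 2 / c := by
    have h : (2:ℝ) / c ^ 2 = (Real.sqrt 2 / c) ^ 2 := by
      rw [div_pow, Real.sq_sqrt (by norm_num : (0:ℝ) ≤ 2)]
    rw [h, Real.sqrt_sq (by positivity)]
  have hmain : ∀ θ : ℝ, 0 < θ →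
      aFun V θ + aFun (reflP V) θ = Real.pi / Real.sqrt (iteratedDeriv 2 V 0) := by
    intro θ hθ
    set s := Real.sqrt θ with hsdef
    have hs : 0 < s := Real.sqrt_pos.mpr hθ
    have hs2 : s ^ 2 = θ := Real.sq_sqrt hθ.le
    have hb1pos : 0 < W s := by rw [← hW0]; exact hWmono hs
    have hb2pos : 0 < -W (-s) := by
      have : W (-s) < W 0 := hWmono (by linarith)
      rw [hW0] at this; linarith
    set g : ℝ → ℝ := fun x => 1 / (Real.sqrt 2 * Real.sqrt (θ - x ^ 2)) with hgdef
    -- Vinv computations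
    have hVinv1 : Vinv V θ = W s := by
      have hset : {y : ℝ | 0 ≤ y ∧ V y ≤ θ} = Icc 0 (W s) := by
        ext y
        simp only [mem_setOf_eq, mem_Icc]
        constructor
        · rintro ⟨hy0, hyV⟩
          refine ⟨hy0, ?_⟩
          have hVsnn : 0 ≤ Vstar y := by
            rw [← hVs0]; exact hmono.monotone hy0
          have h1 : Vstar y ≤ s :=
            (Real.le_sqrt hVsnn hθ.le).mpr (by rw [hsq]; exact hyV)
          calc y = W (Vstar y) := (hWV y).symm
          _ ≤ W s := hWmono.monotone h1
        · rintro ⟨hy0, hyb⟩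
          refine ⟨hy0, ?_⟩
          have h1 : Vstar y ≤ s := by
            have h := hmono.monotone hyb; rwa [hVsW] at h
          have h2 : 0 ≤ Vstar y := by rw [← hVs0]; exact hmono.monotone hy0
          calc V y = Vstar y ^ 2 := (hsq y).symm
          _ ≤ s ^ 2 := by gcongr
          _ = θ := hs2
      rw [Vinv, hset, csSup_Icc hb1pos.le]
    have hVinv2 : Vinv (reflP V) θ = -W (-s) := by
      have hset : {y : ℝ | 0 ≤ y ∧ reflP V y ≤ θ} = Icc 0 (-W (-s)) := by
        ext y
        simp only [reflP, mem_setOf_eq, mem_Icc]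
        constructor
        · rintro ⟨hy0, hyV⟩
          refine ⟨hy0, ?_⟩
          have hVsnp : Vstar (-y) ≤ 0 := by
            rw [← hVs0]; exact hmono.monotone (by linarith)
          have h1 : -Vstar (-y) ≤ s := by
            refine (Real.le_sqrt (by linarith) hθ.le).mpr ?_
            rw [neg_pow]
            simpa [hsq] using hyV
          have h2 : Vstar (W (-s)) ≤ Vstar (-y) := by rw [hVsW]; linarith
          have h3 : W (-s) ≤ -y := hmono.le_iff_le.mp h2
          linarith
        · rintro ⟨hy0, hyb⟩
          refine ⟨hy0, ?_⟩
          have h1 : Vstar (W (-s)) ≤ Vstar (-y) := hmono.monotone (by linarith)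
          rw [hVsW] at h1
          have h2 : Vstar (-y) ≤ 0 := by
            rw [← hVs0]; exact hmono.monotone (by linarith)
          calc V (-y) = Vstar (-y) ^ 2 := (hsq (-y)).symm
          _ ≤ s ^ 2 := sq_le_sq' h1 (by linarith)
          _ = θ := hs2
      rw [Vinv, hset, csSup_Icc hb2pos.le]
    -- change of variables for aFun V
    have hA : aFun V θ = ∫ x in Ioo 0 s, deriv W x * g x := by
      have himg : W '' Ioo 0 s = Ioo 0 (W s) := by
        ext z
        simp only [mem_image, mem_Ioo]
        constructor
        · rintro ⟨x, ⟨hx0, hxs⟩, rfl⟩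
          exact ⟨by rw [← hW0]; exact hWmono hx0, hWmono hxs⟩
        · rintro ⟨hz0, hzb⟩
          refine ⟨Vstar z, ⟨?_, ?_⟩, hWV z⟩
          · rw [← hVs0]; exact hmono hz0
          · have h := hmono hzb
            rwa [hVsW] at h
      have hcov := MeasureTheory.integral_image_eq_integral_abs_deriv_smul
        (s := Ioo 0 s) (f := W) (f' := deriv W)
        measurableSet_Ioo (fun x _ => (hWd x).hasDerivWithinAt)
        (hWmono.injective.injOn)
        (fun y => 1 / (Real.sqrt 2 * Real.sqrt (θ - V y)))
      rw [aFun, hVinv1, intervalIntegral.integral_of_le hb1pos.le,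
        integral_Ioc_eq_integral_Ioo, ← himg, hcov]
      have hfn : (fun x => |deriv W x| • (1 / (Real.sqrt 2 * Real.sqrt (θ - V (W x)))))
          = fun x => deriv W x * g x := by
        funext x
        have hVW : V (W x) = x ^ 2 := by rw [← hsq (W x), hVsW]
        rw [abs_of_nonneg (hWdnn x), smul_eq_mul, hVW]
      rw [hfn]
    -- change of variables for aFun (reflP V)
    set Wn : ℝ → ℝ := fun x => -W (-x) with hWndef
    have hWnd : ∀ x, HasDerivAt Wn (deriv W (-x)) x := by
      intro x
      have h := ((hWd (-x)).comp x (hasDerivAt_neg' (x := x))).neg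
      rw [show deriv W (-x) = -(deriv W (-x) * -1) by ring]; exact h
    have hWnmono : StrictMono Wn := by
      intro a b hab
      have := hWmono (show -b < -a by linarith)
      simp only [hWndef]
      linarith
    have hB : aFun (reflP V) θ = ∫ x in Ioo 0 s, deriv W (-x) * g x := by
      have himg : Wn '' Ioo 0 s = Ioo 0 (-W (-s)) := by
        ext z
        simp only [mem_image, mem_Ioo]
        constructor
        · rintro ⟨x, ⟨hx0, hxs⟩, rfl⟩
          constructor
          · have := hWmono (show -x < (0:ℝ) by linarith)
            rw [hW0] at this
            simp only [hWndef]; linarith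
          · have := hWmono (show -s < -x by linarith)
            simp only [hWndef]; linarith
        · rintro ⟨hz0, hzb⟩
          refine ⟨-Vstar (-z), ⟨?_, ?_⟩, ?_⟩
          · have : Vstar (-z) < Vstar 0 := hmono (by linarith)
            rw [hVs0] at this; linarith
          · have h1 : W (-s) < -z := by linarith
            have h2 : Vstar (W (-s)) < Vstar (-z) := hmono h1
            rw [hVsW] at h2
            linarith
          · simp only [hWndef, neg_neg, hWV]
      have hcov := MeasureTheory.integral_image_eq_integral_abs_deriv_smul
        (s := Ioo 0 s) (f := Wn) (f' := fun x => deriv W (-x))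
        measurableSet_Ioo (fun x _ => (hWnd x).hasDerivWithinAt)
        (hWnmono.injective.injOn)
        (fun y => 1 / (Real.sqrt 2 * Real.sqrt (θ - reflP V y)))
      rw [aFun, hVinv2, intervalIntegral.integral_of_le hb2pos.le,
        integral_Ioc_eq_integral_Ioo, ← himg, hcov]
      have hfn : (fun x => |deriv W (-x)| • (1 / (Real.sqrt 2 * Real.sqrt (θ - reflP V (Wn x)))))
          = fun x => deriv W (-x) * g x := by
        funext x
        have hVW : reflP V (Wn x) = x ^ 2 := by
          simp only [reflP, hWndef, neg_neg]
          rw [← hsq (W (-x)), hVsW, neg_pow]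
          ring
        rw [abs_of_nonneg (hWdnn (-x)), smul_eq_mul, hVW]
      rw [hfn]
    -- integrability
    have hgInt0 : IntegrableOn (fun x => (Real.sqrt (θ - x ^ 2))⁻¹) (Ioo 0 s) volume :=
      (intervalIntegrable_iff_integrableOn_Ioo_of_le hs.le).mp (sqrt_ii θ hθ)
    have hgfun : g = fun x => (Real.sqrt 2)⁻¹ * (Real.sqrt (θ - x ^ 2))⁻¹ := by
      funext x; simp only [hgdef, one_div, mul_inv]
    have hgInt : IntegrableOn g (Ioo 0 s) volume := by
      rw [hgfun]; exact hgInt0.const_mul _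
    have hdfc : Continuous (deriv f) := by
      have hOn : AnalyticOnNhd ℝ f univ := fun x _ => hfa x
      refine continuous_iff_continuousAt.mpr fun x => ?_
      exact ((hOn.deriv) x (mem_univ x)).continuousAt
    have hdWc : Continuous (deriv W) := by
      rw [show deriv W = fun x => c + deriv f (x ^ 2) * (2 * x) from funext hWderiv]
      exact continuous_const.add ((hdfc.comp (continuous_pow 2)).mul
        (continuous_const.mul continuous_id))
    have hint1 : IntegrableOn (fun x => deriv W x * g x) (Ioo 0 s) volume :=
      IntegrableOn.continuousOn_mul_of_subset hdWc.continuousOn hgInt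
        isCompact_Icc measurableSet_Ioo Ioo_subset_Icc_self
    have hint2 : IntegrableOn (fun x => deriv W (-x) * g x) (Ioo 0 s) volume :=
      IntegrableOn.continuousOn_mul_of_subset (hdWc.comp continuous_neg).continuousOn hgInt
        isCompact_Icc measurableSet_Ioo Ioo_subset_Icc_self
    -- assembling
    have hIoo : ∫ x in Ioo 0 s, (Real.sqrt (θ - x ^ 2))⁻¹ = π / 2 := by
      have h := sqrt_integral θ hθ
      rwa [intervalIntegral.integral_of_le hs.le, integral_Ioc_eq_integral_Ioo] at h
    rw [hA, hB, ← MeasureTheory.integral_add hint1 hint2]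
    have hfn2 : (fun x => deriv W x * g x + deriv W (-x) * g x)
        = fun x => 2 * c * g x := by
      funext x; rw [← add_mul, hsum x]
    rw [hfn2, MeasureTheory.integral_const_mul, hgfun,
      MeasureTheory.integral_const_mul, hIoo, hitd, hsqrt2c]
    rw [div_div_eq_mul_div]
    have h2 : Real.sqrt 2 > 0 := by positivity
    field_simp
  exact ⟨hmain, fun θ₁ θ₂ h₁ h₂ => by rw [hmain θ₁ h₁, hmain θ₂ h₂]⟩
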